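/- For every nonempty subset S₀ ⊆ S and every sequence (d_N) of positive integers with d_N → ∞ and d_N/N → 0, there exist a constant C > 0 and N₀ ∈ ℕ such that for all N > N₀: Σ_{ζ ∈ H_{N,S₀}(d_N)} m⋆^ζ/a(ζ) < C/(N^α · d_N^{α−1}), where H_{N,S₀}(d) = {ζ ∈ H_{N,S₀} : ζ_x < N − d for all x ∈ S₀ ∩ S⋆}. -/

import Mathlib

open Filter Topology Finset
open scoped Classical

noncomputable section

/-- `a(n)`: `a(0)=1`, `a(n)=n^α` for `n ≥ 1`. -/
def aZR (α : ℝ) (n : ℕ) : ℝ := if n = 0 then 1 else (n : ℝ) ^ α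

/-- The set of configurations of `N` particles on `S`. -/
def configs (S : Type*) [Fintype S] (N : ℕ) : Finset (S → ℕ) :=
  (Fintype.piFinset fun _ : S => Finset.range (N + 1)).filter fun η => ∑ x, η x = N

end

lemma aZR_pos {α : ℝ} (hα : 0 < α) (n : ℕ) : 0 < aZR α n := by
  unfold aZR; split
  · norm_num
  · exact Real.rpow_pos_of_pos (by positivity) _

lemma aZR_one_le {α : ℝ} (hα : 0 < α) (n : ℕ) : 1 ≤ aZR α n := by
  unfold aZR; split
  · norm_num
  · exact Real.one_le_rpow (by exact_mod_cast Nat.one_le_iff_ne_zero.mpr ‹_›) hα.le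

lemma teleLem (a : ℕ) (ha : 1 ≤ a) :
    ∀ n : ℕ, ∑ M ∈ Finset.Ioc a n, (1/((M:ℝ)-1) - 1/(M:ℝ)) ≤ 1/(a:ℝ) := by
  have key : ∀ n : ℕ, a ≤ n → ∑ M ∈ Finset.Ioc a n, (1/((M:ℝ)-1) - 1/(M:ℝ)) = 1/(a:ℝ) - 1/(n:ℝ) := by
    intro n hn
    induction n, hn using Nat.le_induction with
    | base => simp
    | succ n hn ih =>
        rw [Finset.sum_Ioc_succ_top (by omega), ih]
        have hn1 : (1:ℝ) ≤ (n:ℝ) := by exact_mod_cast (by omega : 1 ≤ n)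
        push_cast
        have : (n:ℝ) + 1 - 1 = (n:ℝ) := by ring
        rw [this]
        have hn0 : (n:ℝ) ≠ 0 := by positivity
        field_simp
        ring
  intro n
  rcases le_or_gt a n with h | h
  · rw [key n h]
    have : 0 ≤ 1/(n:ℝ) := by positivity
    linarith
  · rw [Finset.Ioc_eq_empty (by omega)]
    simp

lemma lemC {α : ℝ} (hα : 2 < α) (a n : ℕ) (ha : 1 ≤ a) :
    ∑ M ∈ Finset.Ioc a n, 1/(M:ℝ)^α ≤ (a:ℝ)^(1-α) := by
  have hA : (1:ℝ) ≤ (a:ℝ) := by exact_mod_cast ha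
  have hA0 : (0:ℝ) < a := by linarith
  have step : ∀ M ∈ Finset.Ioc a n, 1/(M:ℝ)^α ≤ (a:ℝ)^(2-α) * (1/((M:ℝ)-1) - 1/(M:ℝ)) := by
    intro M hM
    obtain ⟨h1, _⟩ := Finset.mem_Ioc.mp hM
    have hx : (a:ℝ) + 1 ≤ (M:ℝ) := by exact_mod_cast h1
    have hx1 : (1:ℝ) < (M:ℝ) := by linarith
    have hx0 : (0:ℝ) < (M:ℝ) := by linarith
    have hM1 : ((M:ℝ)-1) ≠ 0 := by linarith
    have hM0 : (M:ℝ) ≠ 0 := by linarith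
    have hsub : 1/((M:ℝ)-1) - 1/(M:ℝ) = 1/(((M:ℝ)-1)*(M:ℝ)) := by
      field_simp
      ring
    rw [hsub]
    have h2 : (1:ℝ)/(M:ℝ)^α = 1/((M:ℝ)^(2:ℝ) * (M:ℝ)^(α-2)) := by
      rw [← Real.rpow_add hx0]; norm_num
    rw [h2]
    have hle1 : ((M:ℝ)-1)*(M:ℝ) ≤ (M:ℝ)^(2:ℝ) := by
      rw [Real.rpow_two]; nlinarith
    have hle2 : (a:ℝ)^(α-2) ≤ (M:ℝ)^(α-2) :=
      Real.rpow_le_rpow hA0.le (by linarith) (by linarith)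
    have h3 : (a:ℝ)^(2-α) = 1/(a:ℝ)^(α-2) := by
      rw [eq_div_iff (by positivity), ← Real.rpow_add hA0]
      norm_num
    rw [h3, div_mul_div_comm, one_mul]
    apply one_div_le_one_div_of_le
    · exact mul_pos (by positivity) (mul_pos (by linarith) hx0)
    · rw [mul_comm]
      exact mul_le_mul hle1 hle2 (by positivity) (by positivity)
  calc ∑ M ∈ Finset.Ioc a n, 1/(M:ℝ)^α
      ≤ ∑ M ∈ Finset.Ioc a n, (a:ℝ)^(2-α) * (1/((M:ℝ)-1) - 1/(M:ℝ)) :=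
        Finset.sum_le_sum step
    _ = (a:ℝ)^(2-α) * ∑ M ∈ Finset.Ioc a n, (1/((M:ℝ)-1) - 1/(M:ℝ)) := by
        rw [Finset.mul_sum]
    _ ≤ (a:ℝ)^(2-α) * (1/(a:ℝ)) := by
        apply mul_le_mul_of_nonneg_left (teleLem a ha n) (by positivity)
    _ = (a:ℝ)^(1-α) := by
        rw [one_div, ← Real.rpow_neg_one (a:ℝ), ← Real.rpow_add hA0]
        congr 1
        ring

lemma lemB {α : ℝ} (hα : 2 < α) (n : ℕ) :
    ∑ i ∈ Finset.range n, 1/aZR α i ≤ 3 := by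
  have hsub : Finset.range n ⊆ insert 0 (insert 1 (Finset.Ioc 1 n)) := by
    intro i hi
    simp only [Finset.mem_insert, Finset.mem_Ioc]
    rcases Nat.lt_or_ge i 2 with h | h
    · omega
    · right; right; exact ⟨by omega, by simpa using (Finset.mem_range.mp hi).le⟩
  calc ∑ i ∈ Finset.range n, 1/aZR α i
      ≤ ∑ i ∈ insert 0 (insert 1 (Finset.Ioc 1 n)), 1/aZR α i := by
        apply Finset.sum_le_sum_of_subset_of_nonneg hsub
        intro i _ _
        have := aZR_pos (by linarith : (0:ℝ) < α) i
        positivity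
    _ ≤ 3 := by
        rw [Finset.sum_insert (by simp), Finset.sum_insert (by simp)]
        have h0 : 1/aZR α 0 = 1 := by simp [aZR]
        have h1 : 1/aZR α 1 = 1 := by simp [aZR]
        have h2 : ∑ i ∈ Finset.Ioc 1 n, 1/aZR α i ≤ 1 := by
          have : ∀ i ∈ Finset.Ioc 1 n, 1/aZR α i ≤ 1/(i:ℝ)^α := by
            intro i hi
            have : i ≠ 0 := by have := (Finset.mem_Ioc.mp hi).1; omega
            simp [aZR, this]
          calc ∑ i ∈ Finset.Ioc 1 n, 1/aZR α i ≤ ∑ i ∈ Finset.Ioc 1 n, 1/(i:ℝ)^α :=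
                Finset.sum_le_sum this
            _ ≤ ((1:ℕ):ℝ)^(1-α) := lemC hα 1 n le_rfl
            _ = 1 := by norm_num
        linarith

open scoped Classical in
lemma maxsplit {ι : Type*} [Fintype ι] [Nonempty ι] (s : Finset (ι → ℕ)) (f : (ι → ℕ) → ℝ)
    (hf : ∀ ζ, 0 ≤ f ζ) :
    ∑ ζ ∈ s, f ζ ≤ ∑ i : ι, ∑ ζ ∈ s.filter (fun ζ => ∀ j, ζ j ≤ ζ i), f ζ := by
  have : ∀ i : ι, ∑ ζ ∈ s.filter (fun ζ => ∀ j, ζ j ≤ ζ i), f ζ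
      = ∑ ζ ∈ s, if (∀ j, ζ j ≤ ζ i) then f ζ else 0 := fun i => Finset.sum_filter _ _
  simp only [this]
  rw [Finset.sum_comm]
  apply Finset.sum_le_sum
  intro ζ _
  obtain ⟨i₀, _, hi₀⟩ := Finset.exists_max_image Finset.univ ζ Finset.univ_nonempty
  have h1 : (if (∀ j, ζ j ≤ ζ i₀) then f ζ else 0) = f ζ := by
    rw [if_pos (fun j => hi₀ j (Finset.mem_univ j))]
  calc f ζ = (if (∀ j, ζ j ≤ ζ i₀) then f ζ else 0) := h1.symm
    _ ≤ ∑ i : ι, if (∀ j, ζ j ≤ ζ i) then f ζ else 0 := by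
        apply Finset.single_le_sum (fun i _ => ?_) (Finset.mem_univ i₀)
        split
        · exact hf ζ
        · exact le_refl 0

open scoped Classical in
lemma lemA {ι : Type*} [Fintype ι] {α : ℝ} (hα : 2 < α) (M : ℕ) (hM : 1 ≤ M) :
    ∑ η ∈ configs ι M, ∏ i, 1 / aZR α (η i)
      ≤ (Fintype.card ι : ℝ)^α * (Fintype.card ι) * 3^(Fintype.card ι) / (M:ℝ)^α := by
  have hα0 : (0:ℝ) < α := by linarith
  rcases isEmpty_or_nonempty ι with hE | hNE
  · have : configs ι M = ∅ := by
      apply Finset.filter_false_of_mem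
      intro η _
      simp only [Finset.univ_eq_empty, Finset.sum_empty]
      omega
    rw [this]
    simp only [Finset.sum_empty]
    positivity
  set k := Fintype.card ι with hk
  have hk0 : 0 < k := Fintype.card_pos
  have hnn : ∀ η : ι → ℕ, 0 ≤ ∏ i, 1 / aZR α (η i) := by
    intro η
    apply Finset.prod_nonneg
    intro i _
    have := aZR_pos hα0 (η i)
    positivity
  calc ∑ η ∈ configs ι M, ∏ i, 1 / aZR α (η i)
      ≤ ∑ i : ι, ∑ η ∈ (configs ι M).filter (fun η => ∀ j, η j ≤ η i), ∏ j, 1 / aZR α (η j) :=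
        maxsplit _ _ hnn
    _ ≤ ∑ i : ι, (k:ℝ)^α / (M:ℝ)^α * 3^k := by
        apply Finset.sum_le_sum
        intro i _
        -- bound the inner sum
        have key : ∀ η ∈ (configs ι M).filter (fun η => ∀ j, η j ≤ η i),
            (∏ j, 1 / aZR α (η j)) ≤ (k:ℝ)^α / (M:ℝ)^α *
              ∏ j, (if j = i then 1 else 1 / aZR α ((Function.update η i 0) j)) := by
          intro η hη
          rw [Finset.mem_filter] at hη
          obtain ⟨hηc, hmax⟩ := hη
          rw [configs, Finset.mem_filter] at hηc
          obtain ⟨_, hsum⟩ := hηc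
          have hMk : M ≤ k * η i := by
            calc M = ∑ j, η j := hsum.symm
              _ ≤ ∑ _j : ι, η i := Finset.sum_le_sum (fun j _ => hmax j)
              _ = k * η i := by rw [Finset.sum_const, smul_eq_mul, Finset.card_univ]
          have hηi : 1 ≤ η i := by
            rcases Nat.eq_zero_or_pos (η i) with h | h
            · rw [h] at hMk; omega
            · exact h
          have hinv : 1 / aZR α (η i) ≤ (k:ℝ)^α / (M:ℝ)^α := by
            have hne : η i ≠ 0 := by omega
            rw [aZR, if_neg hne, div_le_div_iff₀ (by positivity) (by positivity)]
            rw [one_mul]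
            calc (M:ℝ)^α ≤ ((k * η i : ℕ):ℝ)^α :=
                  Real.rpow_le_rpow (by positivity) (by exact_mod_cast hMk) hα0.le
              _ = (k:ℝ)^α * ((η i:ℝ))^α := by
                  push_cast
                  rw [Real.mul_rpow (by positivity) (by positivity)]
          have hsplit : (∏ j, 1 / aZR α (η j)) =
              (1 / aZR α (η i)) * ∏ j, (if j = i then 1 else 1 / aZR α ((Function.update η i 0) j)) := by
            have h2 : ∏ j, (if j = i then (1:ℝ) else 1 / aZR α ((Function.update η i 0) j))
                = ∏ j ∈ Finset.univ.erase i, 1 / aZR α (η j) := by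
              rw [← Finset.mul_prod_erase Finset.univ
                (fun j => if j = i then (1:ℝ) else 1 / aZR α ((Function.update η i 0) j))
                (Finset.mem_univ i), if_pos rfl, one_mul]
              apply Finset.prod_congr rfl
              intro j hj
              have hji : j ≠ i := (Finset.mem_erase.mp hj).1
              rw [if_neg hji, Function.update_of_ne hji]
            rw [h2, ← Finset.mul_prod_erase Finset.univ (fun j => 1 / aZR α (η j)) (Finset.mem_univ i)]
          rw [hsplit]
          apply mul_le_mul_of_nonneg_right hinv
          apply Finset.prod_nonneg
          intro j _
          split
          · norm_num
          · have := aZR_pos hα0 ((Function.update η i 0) j); positivity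
        set F : (ι → ℕ) → ℝ := fun g => ∏ j, (if j = i then (1:ℝ) else 1 / aZR α (g j)) with hF
        have hFnn : ∀ g, 0 ≤ F g := by
          intro g
          apply Finset.prod_nonneg
          intro j _
          split
          · norm_num
          · have := aZR_pos hα0 (g j); positivity
        calc ∑ η ∈ (configs ι M).filter (fun η => ∀ j, η j ≤ η i), ∏ j, 1 / aZR α (η j)
            ≤ ∑ η ∈ (configs ι M).filter (fun η => ∀ j, η j ≤ η i),
                (k:ℝ)^α / (M:ℝ)^α * F (Function.update η i 0) :=
              Finset.sum_le_sum key
          _ = (k:ℝ)^α / (M:ℝ)^α * ∑ η ∈ (configs ι M).filter (fun η => ∀ j, η j ≤ η i),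
                F (Function.update η i 0) := by
              rw [Finset.mul_sum]
          _ ≤ (k:ℝ)^α / (M:ℝ)^α * 3^k := by
              apply mul_le_mul_of_nonneg_left ?_ (by positivity)
              set t : ι → Finset ℕ := fun j => if j = i then {0} else Finset.range (M+1) with ht
              have himg : ∀ η ∈ (configs ι M).filter (fun η => ∀ j, η j ≤ η i),
                  Function.update η i 0 ∈ Fintype.piFinset t := by
                intro η hη
                rw [Finset.mem_filter] at hη
                obtain ⟨hηc, _⟩ := hη
                rw [configs, Finset.mem_filter, Fintype.mem_piFinset] at hηc
                rw [Fintype.mem_piFinset]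
                intro j
                by_cases hji : j = i
                · subst hji; simp [ht, Function.update_self]
                · rw [Function.update_of_ne hji]
                  simp only [ht, if_neg hji]
                  exact hηc.1 j
              have hinj : ∀ η₁ ∈ (configs ι M).filter (fun η => ∀ j, η j ≤ η i),
                  ∀ η₂ ∈ (configs ι M).filter (fun η => ∀ j, η j ≤ η i),
                  Function.update η₁ i 0 = Function.update η₂ i 0 → η₁ = η₂ := by
                intro η₁ h₁ η₂ h₂ heq
                have hs₁ : ∑ j, η₁ j = M :=
                  (Finset.mem_filter.mp (Finset.mem_filter.mp h₁).1).2
                have hs₂ : ∑ j, η₂ j = M :=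
                  (Finset.mem_filter.mp (Finset.mem_filter.mp h₂).1).2
                have hupd : ∀ j, j ≠ i → η₁ j = η₂ j := by
                  intro j hj
                  have := congrFun heq j
                  rwa [Function.update_of_ne hj, Function.update_of_ne hj] at this
                have he : ∑ j ∈ Finset.univ.erase i, η₁ j = ∑ j ∈ Finset.univ.erase i, η₂ j :=
                  Finset.sum_congr rfl (fun j hj => hupd j (Finset.mem_erase.mp hj).1)
                have h1 : η₁ i + ∑ j ∈ Finset.univ.erase i, η₁ j = M := by
                  rw [Finset.add_sum_erase _ _ (Finset.mem_univ i)]; exact hs₁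
                have h2 : η₂ i + ∑ j ∈ Finset.univ.erase i, η₂ j = M := by
                  rw [Finset.add_sum_erase _ _ (Finset.mem_univ i)]; exact hs₂
                funext j
                by_cases hj : j = i
                · subst hj; omega
                · exact hupd j hj
              calc ∑ η ∈ (configs ι M).filter (fun η => ∀ j, η j ≤ η i), F (Function.update η i 0)
                  = ∑ g ∈ ((configs ι M).filter (fun η => ∀ j, η j ≤ η i)).image
                      (fun η => Function.update η i 0), F g :=
                    (Finset.sum_image hinj).symm
                _ ≤ ∑ g ∈ Fintype.piFinset t, F g := by
                    apply Finset.sum_le_sum_of_subset_of_nonneg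
                    · intro g hg
                      obtain ⟨η, hη, rfl⟩ := Finset.mem_image.mp hg
                      exact himg η hη
                    · intro g _ _; exact hFnn g
                _ = ∏ j, ∑ n ∈ t j, (if j = i then (1:ℝ) else 1 / aZR α n) := by
                    rw [Finset.prod_univ_sum]
                _ ≤ ∏ _j : ι, (3:ℝ) := by
                    apply Finset.prod_le_prod
                    · intro j _
                      apply Finset.sum_nonneg
                      intro n _
                      split
                      · norm_num
                      · have := aZR_pos hα0 n; positivity
                    · intro j _
                      by_cases hji : j = i
                      · subst hji
                        simp [ht]
                      · simp only [ht, if_neg hji]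
                        exact lemB hα _
                _ = (3:ℝ)^k := by
                    rw [Finset.prod_const, Finset.card_univ]
    _ = (k:ℝ)^α * k * 3^k / (M:ℝ)^α := by
        rw [Finset.sum_const, Finset.card_univ, ← hk, nsmul_eq_mul]
        ring

theorem stmt_12 {S : Type*} [Fintype S] (α : ℝ) (hα : 2 < α)
    (m : S → ℝ) (hm : ∀ x, 0 < m x)
    (Mstar : ℝ) (hMstar : IsGreatest (Set.range m) Mstar)
    (Sstar : Finset S) (hSstar : Sstar = Finset.univ.filter fun x => m x = Mstar)
    (mstar : S → ℝ) (hmstar : ∀ x, mstar x = m x / Mstar)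
    (S₀ : Finset S) (hS₀ : S₀.Nonempty)
    (d : ℕ → ℕ) (hdpos : ∀ N, 0 < d N)
    (hd : Tendsto d atTop atTop)
    (hdN : Tendsto (fun N => (d N : ℝ) / (N : ℝ)) atTop (nhds 0)) :
    ∃ C : ℝ, 0 < C ∧ ∃ N₀ : ℕ, ∀ N : ℕ, N₀ < N →
      ∑ ζ ∈ (configs {x // x ∈ S₀} N).filter
          (fun ζ => ∀ x : {x // x ∈ S₀}, (x : S) ∈ Sstar → ζ x + d N < N),
        (∏ x : {x // x ∈ S₀}, mstar x.1 ^ ζ x) /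
          ∏ x : {x // x ∈ S₀}, aZR α (ζ x) <
        C / ((N : ℝ) ^ α * (d N : ℝ) ^ (α - 1)) := by
  classical
  have hα0 : (0:ℝ) < α := by linarith
  haveI hNEι : Nonempty {x // x ∈ S₀} := ⟨⟨hS₀.choose, hS₀.choose_spec⟩⟩
  set k := Fintype.card {x // x ∈ S₀} with hkdef
  have hk0 : 0 < k := Fintype.card_pos
  -- facts about mstar
  have hM0 : 0 < Mstar := by
    obtain ⟨x, hx⟩ := hMstar.1
    rw [← hx]; exact hm x
  have hms_pos : ∀ x, 0 < mstar x := by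
    intro x; rw [hmstar x]; exact div_pos (hm x) hM0
  have hms_le1 : ∀ x, mstar x ≤ 1 := by
    intro x; rw [hmstar x, div_le_one hM0]
    exact hMstar.2 ⟨x, rfl⟩
  have hms_lt1 : ∀ x, x ∉ Sstar → mstar x < 1 := by
    intro x hx
    rw [hSstar] at hx
    simp only [Finset.mem_filter, Finset.mem_univ, true_and] at hx
    rw [hmstar x, div_lt_one hM0]
    exact lt_of_le_of_ne (hMstar.2 ⟨x, rfl⟩) hx
  -- constants
  set Ck : ℝ := (k:ℝ)^α * k * 3^k with hCk
  have hCk0 : 0 < Ck := by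
    have h1 : (0:ℝ) < (k:ℝ) := by exact_mod_cast hk0
    have h2 : (0:ℝ) < (k:ℝ)^α := Real.rpow_pos_of_pos h1 α
    positivity
  set K : ℝ := (k:ℝ)^α * Ck with hK
  have hK0 : 0 < K := by
    have h1 : (0:ℝ) < (k:ℝ) := by exact_mod_cast hk0
    have h2 : (0:ℝ) < (k:ℝ)^α := Real.rpow_pos_of_pos h1 α
    positivity
  refine ⟨k * K + 1, by positivity, ?_⟩
  -- the nonstar error terms
  set p : ℕ := ⌈2*α⌉₊ with hp
  set q : ℕ := k + p with hq
  set G' : ℕ → ℝ := fun N => ∑ x : {x // x ∈ S₀},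
    if (x:S) ∈ Sstar then 0 else ((N:ℝ)+1)^k * mstar x.1 ^ (N/k) * (N:ℝ)^(α+(α-1)) with hG'
  have hdiv : Tendsto (fun N : ℕ => N / k) atTop atTop :=
    tendsto_atTop_atTop.mpr fun b => ⟨k*b, fun n hn => (Nat.le_div_iff_mul_le hk0).mpr (by nlinarith)⟩
  have hG'0 : Tendsto G' atTop (nhds 0) := by
    rw [hG']
    have : (0:ℝ) = ∑ _x : {x // x ∈ S₀}, (0:ℝ) := by simp
    rw [this]
    apply tendsto_finset_sum
    intro x _
    by_cases hx : (x:S) ∈ Sstar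
    · simpa [hx] using tendsto_const_nhds (α := ℕ) (f := atTop) (a := (0:ℝ))
    · simp only [hx, if_false]
      set r : ℝ := mstar x.1 with hr
      have hr0 : 0 < r := hms_pos x.1
      have hr1 : r < 1 := hms_lt1 x.1 hx
      -- dominating sequence
      have hgeo : Tendsto (fun j : ℕ => (j:ℝ)^q * r^j) atTop (nhds 0) :=
        (summable_pow_mul_geometric_of_norm_lt_one (R := ℝ) q
          (by rw [Real.norm_eq_abs, abs_of_pos hr0]; exact hr1)).tendsto_atTop_zero
      have hg : Tendsto (fun j : ℕ => ((j:ℝ)+1)^q * r^j) atTop (nhds 0) := by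
        have h2 := (hgeo.comp (tendsto_add_atTop_nat 1)).const_mul (1/r)
        simp only [mul_zero] at h2
        apply (by simpa using h2 : Tendsto (fun j : ℕ => (1/r) * (((j+1:ℕ):ℝ)^q * r^(j+1))) atTop (nhds 0)).congr
        intro j
        push_cast
        field_simp
        ring
      have hcomp : Tendsto (fun N : ℕ => (k:ℝ)^q * ((((N/k : ℕ)):ℝ)+1)^q * r^(N/k)) atTop (nhds 0) := by
        have := (hg.comp hdiv).const_mul ((k:ℝ)^q)
        simp only [mul_zero] at this
        apply this.congr
        intro N
        simp [Function.comp, mul_assoc]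
      apply squeeze_zero' (g := fun N : ℕ => (k:ℝ)^q * ((((N/k : ℕ)):ℝ)+1)^q * r^(N/k)) ?_ ?_ hcomp
      · filter_upwards with N
        have h1 : (0:ℝ) ≤ ((N:ℝ)+1)^k := by positivity
        have h2 : (0:ℝ) ≤ r^(N/k) := by positivity
        have h3 : (0:ℝ) ≤ (N:ℝ)^(α+(α-1)) := Real.rpow_nonneg (by positivity) _
        positivity
      · filter_upwards [eventually_ge_atTop 1] with N hN1
        have hN0 : (0:ℝ) < (N:ℝ) := by exact_mod_cast hN1
        have hrp : (0:ℝ) ≤ r^(N/k) := by positivity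
        have step1 : (N:ℝ)^(α+(α-1)) ≤ ((N:ℝ)+1)^(p:ℝ) := by
          calc (N:ℝ)^(α+(α-1)) ≤ ((N:ℝ)+1)^(α+(α-1)) :=
                Real.rpow_le_rpow hN0.le (by linarith) (by linarith)
            _ ≤ ((N:ℝ)+1)^(p:ℝ) := by
                apply Real.rpow_le_rpow_of_exponent_le (by linarith)
                have := Nat.le_ceil (2*α)
                rw [hp]; push_cast at this ⊢; linarith
        have step1' : (N:ℝ)^(α+(α-1)) ≤ ((N:ℝ)+1)^p := by
          rw [← Real.rpow_natCast ((N:ℝ)+1) p]; exact step1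
        have step2 : ((N:ℝ)+1)^k * r^(N/k) * (N:ℝ)^(α+(α-1)) ≤ ((N:ℝ)+1)^q * r^(N/k) := by
          rw [hq, pow_add]
          calc ((N:ℝ)+1)^k * r^(N/k) * (N:ℝ)^(α+(α-1))
              ≤ ((N:ℝ)+1)^k * r^(N/k) * ((N:ℝ)+1)^p := by
                apply mul_le_mul_of_nonneg_left step1' (by positivity)
            _ = ((N:ℝ)+1)^k * ((N:ℝ)+1)^p * r^(N/k) := by ring
        have step3 : ((N:ℝ)+1) ≤ (k:ℝ) * (((N/k:ℕ):ℝ)+1) := by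
          have := Nat.div_add_mod N k
          have hmod : N % k < k := Nat.mod_lt N hk0
          have : N + 1 ≤ k * (N/k + 1) := by nlinarith [Nat.div_add_mod N k]
          exact_mod_cast this
        have step4 : ((N:ℝ)+1)^q ≤ (k:ℝ)^q * (((N/k:ℕ):ℝ)+1)^q := by
          rw [← mul_pow]
          exact pow_le_pow_left₀ (by positivity) step3 q
        calc ((N:ℝ)+1)^k * r^(N/k) * (N:ℝ)^(α+(α-1)) ≤ ((N:ℝ)+1)^q * r^(N/k) := step2
          _ ≤ ((k:ℝ)^q * (((N/k:ℕ):ℝ)+1)^q) * r^(N/k) :=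
              mul_le_mul_of_nonneg_right step4 hrp
          _ = (k:ℝ)^q * (((N/k:ℕ):ℝ)+1)^q * r^(N/k) := by ring
  -- eventual facts
  have hE1 : ∀ᶠ N : ℕ in atTop, 1 ≤ N := eventually_ge_atTop 1
  have hE2 : ∀ᶠ N : ℕ in atTop, d N ≤ N := by
    have h1 : ∀ᶠ N : ℕ in atTop, (d N : ℝ)/(N:ℝ) < 1 := hdN.eventually_lt_const one_pos
    filter_upwards [h1, eventually_ge_atTop 1] with N h hN1
    have hN0 : (0:ℝ) < (N:ℝ) := by exact_mod_cast hN1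
    rw [div_lt_one hN0] at h
    exact_mod_cast h.le
  have hE3 : ∀ᶠ N : ℕ in atTop, G' N < 1 := hG'0.eventually_lt_const one_pos
  obtain ⟨N₀, hN₀⟩ := eventually_atTop.mp ((hE1.and hE2).and hE3)
  refine ⟨N₀, ?_⟩
  intro N hN
  obtain ⟨⟨hN1, hdle⟩, hG'lt⟩ := hN₀ N hN.le
  have hdN1 : 1 ≤ d N := hdpos N
  have hNR : (0:ℝ) < (N:ℝ) := by exact_mod_cast hN1
  have hdR : (0:ℝ) < (d N:ℝ) := by exact_mod_cast hdN1
  set D : ℝ := (N:ℝ)^α * (d N:ℝ)^(α-1) with hD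
  have hD0 : 0 < D := mul_pos (Real.rpow_pos_of_pos hNR α) (Real.rpow_pos_of_pos hdR (α-1))
  set s : Finset ({x // x ∈ S₀} → ℕ) := (configs {x // x ∈ S₀} N).filter
      (fun ζ => ∀ x : {x // x ∈ S₀}, (x : S) ∈ Sstar → ζ x + d N < N) with hsdef
  set w : ({x // x ∈ S₀} → ℕ) → ℝ := fun ζ =>
      (∏ x : {x // x ∈ S₀}, mstar x.1 ^ ζ x) / ∏ x : {x // x ∈ S₀}, aZR α (ζ x) with hw
  have hwnn : ∀ ζ, 0 ≤ w ζ := by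
    intro ζ
    rw [hw]
    have h1 : (0:ℝ) ≤ ∏ x : {x // x ∈ S₀}, mstar x.1 ^ ζ x :=
      Finset.prod_nonneg fun y _ => pow_nonneg (hms_pos _).le _
    have h2 : (0:ℝ) < ∏ x : {x // x ∈ S₀}, aZR α (ζ x) :=
      Finset.prod_pos fun y _ => aZR_pos hα0 _
    positivity
  have hFinv_nn : ∀ g : {x // x ∈ S₀} → ℕ, 0 ≤ ∏ y, 1 / aZR α (g y) := by
    intro g
    apply Finset.prod_nonneg
    intro y _
    have := aZR_pos hα0 (g y)
    positivity
  have mem_configs : ∀ (M : ℕ) (g : {x // x ∈ S₀} → ℕ),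
      g ∈ configs {x // x ∈ S₀} M ↔ (∀ y, g y < M + 1) ∧ ∑ y, g y = M := by
    intro M g
    simp only [configs, Finset.mem_filter, Fintype.mem_piFinset, Finset.mem_range]
  -- star-site bound
  have hstar : ∀ x : {x // x ∈ S₀}, (x:S) ∈ Sstar →
      ∑ ζ ∈ s.filter (fun ζ => ∀ j, ζ j ≤ ζ x), w ζ ≤ K / D := by
    intro x hx
    set A := s.filter (fun ζ => ∀ j, ζ j ≤ ζ x) with hA
    have hmem : ∀ ζ ∈ A, (∑ y, ζ y = N) ∧ (ζ x + d N < N) ∧ (∀ j, ζ j ≤ ζ x) := by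
      intro ζ hζ
      rw [hA, Finset.mem_filter] at hζ
      obtain ⟨hζs, hmax⟩ := hζ
      rw [hsdef, Finset.mem_filter] at hζs
      obtain ⟨hζc, hcond⟩ := hζs
      exact ⟨((mem_configs N ζ).mp hζc).2, hcond x hx, hmax⟩
    have hpt : ∀ ζ ∈ A, w ζ ≤ (k:ℝ)^α/(N:ℝ)^α *
        ∏ y, 1 / aZR α (Function.update ζ x 0 y) := by
      intro ζ hζ
      obtain ⟨hsum, hcond, hmax⟩ := hmem ζ hζ
      have hMk : N ≤ k * ζ x := by
        calc N = ∑ y, ζ y := hsum.symm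
          _ ≤ ∑ _y : {x // x ∈ S₀}, ζ x := Finset.sum_le_sum fun j _ => hmax j
          _ = k * ζ x := by rw [Finset.sum_const, smul_eq_mul, Finset.card_univ]
      have hζx1 : 1 ≤ ζ x := by
        rcases Nat.eq_zero_or_pos (ζ x) with h | h
        · rw [h] at hMk; omega
        · exact h
      have hnum : (∏ y : {x // x ∈ S₀}, mstar y.1 ^ ζ y) ≤ 1 :=
        Finset.prod_le_one (fun y _ => pow_nonneg (hms_pos _).le _)
          (fun y _ => pow_le_one₀ (hms_pos _).le (hms_le1 _))
      have hden : (0:ℝ) < ∏ y : {x // x ∈ S₀}, aZR α (ζ y) :=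
        Finset.prod_pos fun y _ => aZR_pos hα0 _
      have h1 : w ζ ≤ 1 / ∏ y : {x // x ∈ S₀}, aZR α (ζ y) := by
        rw [hw]
        exact div_le_div₀ zero_le_one hnum hden le_rfl
      have hprodsplit : ∏ y : {x // x ∈ S₀}, aZR α (ζ y)
          = aZR α (ζ x) * ∏ y, aZR α (Function.update ζ x 0 y) := by
        have h2 : ∏ y, aZR α (Function.update ζ x 0 y)
            = ∏ y ∈ Finset.univ.erase x, aZR α (ζ y) := by
          rw [← Finset.mul_prod_erase Finset.univ
            (fun y => aZR α (Function.update ζ x 0 y)) (Finset.mem_univ x)]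
          rw [Function.update_self]
          have h0 : aZR α 0 = 1 := by simp [aZR]
          rw [h0, one_mul]
          exact Finset.prod_congr rfl fun j hj => by
            rw [Function.update_of_ne (Finset.mem_erase.mp hj).1]
        rw [h2, ← Finset.mul_prod_erase Finset.univ (fun y => aZR α (ζ y)) (Finset.mem_univ x)]
      have hinv : 1 / aZR α (ζ x) ≤ (k:ℝ)^α/(N:ℝ)^α := by
        have hne : ζ x ≠ 0 := by omega
        have hζR : (0:ℝ) < ((ζ x : ℕ):ℝ) := by exact_mod_cast hζx1
        rw [aZR, if_neg hne, div_le_div_iff₀ (Real.rpow_pos_of_pos hζR α)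
          (Real.rpow_pos_of_pos hNR α), one_mul]
        calc (N:ℝ)^α ≤ ((k * ζ x : ℕ):ℝ)^α :=
              Real.rpow_le_rpow (by positivity) (by exact_mod_cast hMk) hα0.le
          _ = (k:ℝ)^α * ((ζ x:ℕ):ℝ)^α := by
              push_cast
              rw [Real.mul_rpow (by positivity) (by positivity)]
      calc w ζ ≤ 1 / ∏ y : {x // x ∈ S₀}, aZR α (ζ y) := h1
        _ = (1/aZR α (ζ x)) * ∏ y, 1 / aZR α (Function.update ζ x 0 y) := by
            rw [hprodsplit]
            simp only [one_div, mul_inv]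
            congr 1
            rw [← Finset.prod_inv_distrib]
        _ ≤ (k:ℝ)^α/(N:ℝ)^α * ∏ y, 1 / aZR α (Function.update ζ x 0 y) :=
            mul_le_mul_of_nonneg_right hinv (hFinv_nn _)
    have hsum2 : ∑ ζ ∈ A, ∏ y, 1/aZR α (Function.update ζ x 0 y)
        ≤ ∑ M ∈ Finset.Ioc (d N) N, ∑ g ∈ configs {x // x ∈ S₀} M, ∏ y, 1/aZR α (g y) := by
      set Φ : ({x // x ∈ S₀} → ℕ) → ((_ : ℕ) × ({x // x ∈ S₀} → ℕ)) :=
        fun ζ => ⟨N - ζ x, Function.update ζ x 0⟩ with hΦ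
      have hbasic : ∀ ζ ∈ A, ζ x ≤ N ∧ (∑ y ∈ Finset.univ.erase x, ζ y) = N - ζ x ∧ d N < N - ζ x := by
        intro ζ hζ
        obtain ⟨hsum, hcond, _⟩ := hmem ζ hζ
        have hle : ζ x ≤ N := by
          rw [← hsum]
          exact Finset.single_le_sum (f := ζ) (fun j _ => Nat.zero_le _) (Finset.mem_univ x)
        have he : ζ x + ∑ y ∈ Finset.univ.erase x, ζ y = N := by
          rw [Finset.add_sum_erase _ _ (Finset.mem_univ x)]; exact hsum
        exact ⟨hle, by omega, by omega⟩
      have himg : ∀ ζ ∈ A, Φ ζ ∈ (Finset.Ioc (d N) N).sigma (fun M => configs {x // x ∈ S₀} M) := by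
        intro ζ hζ
        obtain ⟨hle, herase, hgt⟩ := hbasic ζ hζ
        rw [Finset.mem_sigma]
        constructor
        · show N - ζ x ∈ Finset.Ioc (d N) N
          rw [Finset.mem_Ioc]
          omega
        · show Function.update ζ x 0 ∈ configs {x // x ∈ S₀} (N - ζ x)
          rw [mem_configs]
          constructor
          · intro y
            by_cases hyx : y = x
            · subst hyx; rw [Function.update_self]; omega
            · rw [Function.update_of_ne hyx]
              have : ζ y ≤ ∑ z ∈ Finset.univ.erase x, ζ z :=
                Finset.single_le_sum (f := ζ) (fun j _ => Nat.zero_le _)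
                  (Finset.mem_erase.mpr ⟨hyx, Finset.mem_univ y⟩)
              omega
          · rw [Finset.sum_update_of_mem (Finset.mem_univ x), zero_add,
              Finset.sdiff_singleton_eq_erase]
            exact herase
      have hinj : ∀ ζ₁ ∈ A, ∀ ζ₂ ∈ A, Φ ζ₁ = Φ ζ₂ → ζ₁ = ζ₂ := by
        intro ζ₁ h₁ ζ₂ h₂ heq
        obtain ⟨hle₁, _, _⟩ := hbasic ζ₁ h₁
        obtain ⟨hle₂, _, _⟩ := hbasic ζ₂ h₂
        have heq' : (⟨N - ζ₁ x, Function.update ζ₁ x 0⟩ : (_ : ℕ) × ({x // x ∈ S₀} → ℕ))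
            = ⟨N - ζ₂ x, Function.update ζ₂ x 0⟩ := heq
        rw [Sigma.mk.inj_iff] at heq'
        obtain ⟨he1, he2⟩ := heq'
        have he2' : Function.update ζ₁ x 0 = Function.update ζ₂ x 0 := eq_of_heq he2
        have hxx : ζ₁ x = ζ₂ x := by omega
        funext j
        by_cases hj : j = x
        · subst hj; exact hxx
        · have := congrFun he2' j
          rwa [Function.update_of_ne hj, Function.update_of_ne hj] at this
      calc ∑ ζ ∈ A, ∏ y, 1/aZR α (Function.update ζ x 0 y)
          = ∑ pr ∈ A.image Φ, ∏ y, 1/aZR α (pr.2 y) := by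
            rw [Finset.sum_image hinj]
        _ ≤ ∑ pr ∈ (Finset.Ioc (d N) N).sigma (fun M => configs {x // x ∈ S₀} M),
              ∏ y, 1/aZR α (pr.2 y) := by
            apply Finset.sum_le_sum_of_subset_of_nonneg
            · intro pr hpr
              obtain ⟨ζ, hζ, rfl⟩ := Finset.mem_image.mp hpr
              exact himg ζ hζ
            · intro pr _ _
              exact hFinv_nn _
        _ = ∑ M ∈ Finset.Ioc (d N) N, ∑ g ∈ configs {x // x ∈ S₀} M, ∏ y, 1/aZR α (g y) :=
            Finset.sum_sigma _ _ _
    have hsum3 : ∑ M ∈ Finset.Ioc (d N) N, ∑ g ∈ configs {x // x ∈ S₀} M, ∏ y, 1/aZR α (g y)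
        ≤ Ck * (d N:ℝ)^(1-α) := by
      calc ∑ M ∈ Finset.Ioc (d N) N, ∑ g ∈ configs {x // x ∈ S₀} M, ∏ y, 1/aZR α (g y)
          ≤ ∑ M ∈ Finset.Ioc (d N) N, Ck * (1/(M:ℝ)^α) := by
            apply Finset.sum_le_sum
            intro M hM
            have h1M : 1 ≤ M := by
              have := (Finset.mem_Ioc.mp hM).1
              omega
            have := lemA (ι := {x // x ∈ S₀}) hα M h1M
            rw [← hkdef] at this
            rw [hCk]
            calc ∑ g ∈ configs {x // x ∈ S₀} M, ∏ y, 1/aZR α (g y)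
                ≤ (k:ℝ)^α * k * 3^k / (M:ℝ)^α := this
              _ = (k:ℝ)^α * k * 3^k * (1/(M:ℝ)^α) := by ring
        _ = Ck * ∑ M ∈ Finset.Ioc (d N) N, 1/(M:ℝ)^α := by rw [Finset.mul_sum]
        _ ≤ Ck * (d N:ℝ)^(1-α) :=
            mul_le_mul_of_nonneg_left (lemC hα (d N) N hdN1) hCk0.le
    calc ∑ ζ ∈ A, w ζ
        ≤ ∑ ζ ∈ A, (k:ℝ)^α/(N:ℝ)^α * ∏ y, 1 / aZR α (Function.update ζ x 0 y) :=
          Finset.sum_le_sum hpt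
      _ = (k:ℝ)^α/(N:ℝ)^α * ∑ ζ ∈ A, ∏ y, 1 / aZR α (Function.update ζ x 0 y) := by
          rw [Finset.mul_sum]
      _ ≤ (k:ℝ)^α/(N:ℝ)^α * (Ck * (d N:ℝ)^(1-α)) := by
          apply mul_le_mul_of_nonneg_left (le_trans hsum2 hsum3)
          have := Real.rpow_pos_of_pos hNR α
          have h1 : (0:ℝ) < (k:ℝ) := by exact_mod_cast hk0
          have := Real.rpow_pos_of_pos h1 α
          positivity
      _ = K / D := by
          rw [hK, hD]
          have h1 : (d N:ℝ)^(1-α) = ((d N:ℝ)^(α-1))⁻¹ := by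
            rw [← Real.rpow_neg hdR.le]
            congr 1
            ring
          rw [h1]
          have h2 : ((N:ℝ)^α) ≠ 0 := (Real.rpow_pos_of_pos hNR α).ne'
          have h3 : ((d N:ℝ)^(α-1)) ≠ 0 := (Real.rpow_pos_of_pos hdR (α-1)).ne'
          field_simp
  -- nonstar-site bound
  have hnonstar : ∀ x : {x // x ∈ S₀}, (x:S) ∉ Sstar →
      ∑ ζ ∈ s.filter (fun ζ => ∀ j, ζ j ≤ ζ x), w ζ
        ≤ ((N:ℝ)+1)^k * mstar x.1 ^ (N/k) := by
    intro x hx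
    set A := s.filter (fun ζ => ∀ j, ζ j ≤ ζ x) with hA
    have hbnn : (0:ℝ) ≤ mstar x.1 ^ (N/k) := pow_nonneg (hms_pos _).le _
    have hptn : ∀ ζ ∈ A, w ζ ≤ mstar x.1 ^ (N/k) := by
      intro ζ hζ
      rw [hA, Finset.mem_filter] at hζ
      obtain ⟨hζs, hmax⟩ := hζ
      rw [hsdef, Finset.mem_filter] at hζs
      obtain ⟨hζc, _⟩ := hζs
      have hsum : ∑ y, ζ y = N := ((mem_configs N ζ).mp hζc).2
      have hMk : N ≤ k * ζ x := by
        calc N = ∑ y, ζ y := hsum.symm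
          _ ≤ ∑ _y : {x // x ∈ S₀}, ζ x := Finset.sum_le_sum fun j _ => hmax j
          _ = k * ζ x := by rw [Finset.sum_const, smul_eq_mul, Finset.card_univ]
      have hdvd : N/k ≤ ζ x := by
        have h1 : N/k ≤ (k * ζ x)/k := Nat.div_le_div_right hMk
        rwa [Nat.mul_div_cancel_left _ hk0] at h1
      have hden1 : (1:ℝ) ≤ ∏ y : {x // x ∈ S₀}, aZR α (ζ y) := by
        calc (1:ℝ) = ∏ _y : {x // x ∈ S₀}, (1:ℝ) := (Finset.prod_const_one).symm
          _ ≤ ∏ y : {x // x ∈ S₀}, aZR α (ζ y) :=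
              Finset.prod_le_prod (fun y _ => zero_le_one) (fun y _ => aZR_one_le hα0 _)
      have hnum_nn : (0:ℝ) ≤ ∏ y : {x // x ∈ S₀}, mstar y.1 ^ ζ y :=
        Finset.prod_nonneg fun y _ => pow_nonneg (hms_pos _).le _
      have h1 : w ζ ≤ ∏ y : {x // x ∈ S₀}, mstar y.1 ^ ζ y := by
        rw [hw]
        exact div_le_self hnum_nn hden1
      have h2 : ∏ y : {x // x ∈ S₀}, mstar y.1 ^ ζ y ≤ mstar x.1 ^ ζ x := by
        rw [← Finset.mul_prod_erase Finset.univ (fun y => mstar y.1 ^ ζ y) (Finset.mem_univ x)]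
        calc mstar x.1 ^ ζ x * ∏ y ∈ Finset.univ.erase x, mstar y.1 ^ ζ y
            ≤ mstar x.1 ^ ζ x * 1 := by
              apply mul_le_mul_of_nonneg_left ?_ (pow_nonneg (hms_pos _).le _)
              exact Finset.prod_le_one (fun y _ => pow_nonneg (hms_pos _).le _)
                (fun y _ => pow_le_one₀ (hms_pos _).le (hms_le1 _))
          _ = mstar x.1 ^ ζ x := mul_one _
      have h3 : mstar x.1 ^ ζ x ≤ mstar x.1 ^ (N/k) :=
        pow_le_pow_of_le_one (hms_pos _).le (hms_le1 _) hdvd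
      linarith
    have hcard : (A.card : ℝ) ≤ ((N:ℝ)+1)^k := by
      have h1 : A ⊆ Fintype.piFinset (fun _ : {x // x ∈ S₀} => Finset.range (N+1)) := by
        intro ζ hζ
        rw [hA, Finset.mem_filter] at hζ
        have hζs := hζ.1
        rw [hsdef, Finset.mem_filter] at hζs
        have hζc := hζs.1
        rw [Fintype.mem_piFinset]
        intro y
        rw [Finset.mem_range]
        exact ((mem_configs N ζ).mp hζc).1 y
      have h2 := Finset.card_le_card h1
      rw [Fintype.card_piFinset] at h2
      simp only [Finset.card_range, Finset.prod_const, Finset.card_univ] at h2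
      calc (A.card : ℝ) ≤ (((N+1)^k : ℕ) : ℝ) := by exact_mod_cast h2
        _ = ((N:ℝ)+1)^k := by push_cast; ring
    calc ∑ ζ ∈ A, w ζ ≤ A.card • (mstar x.1 ^ (N/k)) :=
          Finset.sum_le_card_nsmul A w _ hptn
      _ = (A.card:ℝ) * (mstar x.1 ^ (N/k)) := nsmul_eq_mul _ _
      _ ≤ ((N:ℝ)+1)^k * mstar x.1 ^ (N/k) :=
          mul_le_mul_of_nonneg_right hcard hbnn
  -- assembly
  have main : ∑ ζ ∈ s, w ζ ≤ ∑ x : {x // x ∈ S₀},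
      (if (x:S) ∈ Sstar then K/D else ((N:ℝ)+1)^k * mstar x.1 ^ (N/k)) := by
    refine le_trans (maxsplit s w hwnn) (Finset.sum_le_sum ?_)
    intro x _
    by_cases hx : (x:S) ∈ Sstar
    · rw [if_pos hx]; exact hstar x hx
    · rw [if_neg hx]; exact hnonstar x hx
  have hsplit2 : ∑ x : {x // x ∈ S₀},
      (if (x:S) ∈ Sstar then K/D else ((N:ℝ)+1)^k * mstar x.1 ^ (N/k))
      = (∑ x : {x // x ∈ S₀}, if (x:S) ∈ Sstar then K/D else 0)
        + ∑ x : {x // x ∈ S₀}, (if (x:S) ∈ Sstar then 0 else ((N:ℝ)+1)^k * mstar x.1 ^ (N/k)) := by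
    rw [← Finset.sum_add_distrib]
    apply Finset.sum_congr rfl
    intro x _
    split <;> simp
  have hb1 : (∑ x : {x // x ∈ S₀}, if (x:S) ∈ Sstar then K/D else 0) ≤ k * (K/D) := by
    calc (∑ x : {x // x ∈ S₀}, if (x:S) ∈ Sstar then K/D else 0)
        ≤ ∑ _x : {x // x ∈ S₀}, K/D := by
          apply Finset.sum_le_sum
          intro x _
          split
          · exact le_rfl
          · positivity
      _ = k * (K/D) := by
          rw [Finset.sum_const, Finset.card_univ, nsmul_eq_mul, hkdef]
  have hb2 : ∑ x : {x // x ∈ S₀}, (if (x:S) ∈ Sstar then 0 else ((N:ℝ)+1)^k * mstar x.1 ^ (N/k))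
      < 1/D := by
    have hDle : D ≤ (N:ℝ)^(α+(α-1)) := by
      rw [hD, Real.rpow_add hNR]
      apply mul_le_mul_of_nonneg_left ?_ (Real.rpow_pos_of_pos hNR α).le
      exact Real.rpow_le_rpow hdR.le (by exact_mod_cast hdle) (by linarith)
    have h4 : (∑ x : {x // x ∈ S₀},
        (if (x:S) ∈ Sstar then 0 else ((N:ℝ)+1)^k * mstar x.1 ^ (N/k))) * D ≤ G' N := by
      rw [Finset.sum_mul, hG']
      apply Finset.sum_le_sum
      intro x _
      by_cases hx : (x:S) ∈ Sstar
      · simp [hx]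
      · simp only [hx, if_false]
        have hmx := hms_pos (x:S)
        exact mul_le_mul_of_nonneg_left hDle (by positivity)
    have h5 : (∑ x : {x // x ∈ S₀},
        (if (x:S) ∈ Sstar then 0 else ((N:ℝ)+1)^k * mstar x.1 ^ (N/k))) * D < 1 :=
      lt_of_le_of_lt h4 hG'lt
    rw [lt_div_iff₀ hD0]
    exact h5
  calc ∑ ζ ∈ s, w ζ
      ≤ ∑ x : {x // x ∈ S₀},
          (if (x:S) ∈ Sstar then K/D else ((N:ℝ)+1)^k * mstar x.1 ^ (N/k)) := main
    _ = (∑ x : {x // x ∈ S₀}, if (x:S) ∈ Sstar then K/D else 0)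
        + ∑ x : {x // x ∈ S₀}, (if (x:S) ∈ Sstar then 0 else ((N:ℝ)+1)^k * mstar x.1 ^ (N/k)) :=
        hsplit2
    _ < k * (K/D) + 1/D := add_lt_add_of_le_of_lt hb1 hb2
    _ = (↑k * K + 1)/D := by
        field_simp
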